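/- (Donsker–Varadhan representation) For probability measures P and Q on a measurable space Ω with P absolutely continuous with respect to Q, KL(P||Q) = sup_T { E_P[T] - log E_Q[exp(T)] }, where the supremum is over all measurable functions T: Ω → ℝ such that both expectations are finite. -/

import Mathlib

open MeasureTheory

/-- Upper bound: each Donsker–Varadhan functional value is at most the KL integral. -/
lemma dv_upper {Ω : Type*} [MeasurableSpace Ω]
    (P Q : Measure Ω) [IsProbabilityMeasure P] [IsProbabilityMeasure Q]
    (hPQ : P ≪ Q)
    (hint : Integrable (fun x => Real.log ((P.rnDeriv Q x).toReal)) P)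
    (T : Ω → ℝ) (hTmeas : Measurable T) (hTP : Integrable T P)
    (hTQ : Integrable (fun x => Real.exp (T x)) Q) :
    (∫ x, T x ∂P) - Real.log (∫ x, Real.exp (T x) ∂Q)
      ≤ ∫ x, Real.log ((P.rnDeriv Q x).toReal) ∂P := by
  set f : Ω → ℝ := fun x => (P.rnDeriv Q x).toReal with hf
  have hfmeas : Measurable f := (Measure.measurable_rnDeriv P Q).ennreal_toReal
  set Z : ℝ := ∫ x, Real.exp (T x) ∂Q with hZ
  have hZpos : 0 < Z := by
    rw [hZ]
    apply integral_pos_iff_support_of_nonneg_ae (.of_forall fun x => (Real.exp_pos _).le) hTQ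
      |>.mpr
    have : (Function.support fun x => Real.exp (T x)) = Set.univ := by
      ext x; simp [Function.support, (Real.exp_pos (T x)).ne']
    rw [this]; simp
  -- a.e. positivity of f under P
  have hfpos : ∀ᵐ x ∂P, 0 < f x := by
    filter_upwards [Measure.rnDeriv_pos hPQ, hPQ.ae_le (Measure.rnDeriv_lt_top P Q)]
      with x h1 h2
    exact ENNReal.toReal_pos h1.ne' h2.ne
  -- h = exp T / f
  set h : Ω → ℝ := fun x => Real.exp (T x) / f x with hh
  have hhmeas : Measurable h := (Real.measurable_exp.comp hTmeas).div hfmeas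
  have hfh_le : ∀ x, f x • h x ≤ Real.exp (T x) := by
    intro x
    by_cases hx : f x = 0
    · simp [hh, hx, (Real.exp_pos (T x)).le]
    · rw [smul_eq_mul, hh, mul_div_cancel₀ _ hx]
  have hfh_nonneg : ∀ x, 0 ≤ f x • h x := by
    intro x
    exact smul_nonneg ENNReal.toReal_nonneg
      (div_nonneg (Real.exp_pos _).le ENNReal.toReal_nonneg)
  have hfhQ : Integrable (fun x => f x • h x) Q := by
    refine hTQ.mono ((hfmeas.smul hhmeas).aestronglyMeasurable) (.of_forall fun x => ?_)
    rw [Real.norm_eq_abs, Real.norm_eq_abs, abs_of_nonneg (hfh_nonneg x),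
      abs_of_nonneg (Real.exp_pos _).le]
    exact hfh_le x
  have hhP : Integrable h P := (integrable_rnDeriv_smul_iff hPQ).mp hfhQ
  have hintP : ∫ x, h x ∂P ≤ Z := by
    rw [← integral_rnDeriv_smul hPQ]
    exact integral_mono hfhQ hTQ hfh_le
  -- log h = T - log f a.e. P
  have hlog : ∀ᵐ x ∂P, T x - Real.log (f x) = Real.log (h x) := by
    filter_upwards [hfpos] with x hx
    rw [hh, Real.log_div (Real.exp_pos _).ne' hx.ne', Real.log_exp]
  -- tangent line bound : log t ≤ t/Z + log Z - 1 for t > 0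
  have htangent : ∀ᵐ x ∂P, Real.log (h x) ≤ h x / Z + Real.log Z - 1 := by
    filter_upwards [hfpos] with x hx
    have hhx : 0 < h x := div_pos (Real.exp_pos _) hx
    have := Real.log_le_sub_one_of_pos (div_pos hhx hZpos)
    rw [Real.log_div hhx.ne' hZpos.ne'] at this
    linarith
  have key : ∫ x, Real.log (h x) ∂P ≤ Z / Z + Real.log Z - 1 := by
    have h1 : ∫ x, Real.log (h x) ∂P ≤ ∫ x, (h x / Z + Real.log Z - 1) ∂P := by
      refine integral_mono_ae ?_ ?_ htangent
      · exact (hTP.sub hint).congr hlog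
      · exact ((hhP.div_const Z).add (integrable_const _)).sub (integrable_const _)
    have h2 : ∫ x, (h x / Z + Real.log Z - 1) ∂P
        = (∫ x, h x ∂P) / Z + Real.log Z - 1 := by
      have hA : Integrable (fun x => h x / Z + Real.log Z) P :=
        (hhP.div_const Z).add (integrable_const _)
      simp only [integral_sub hA (integrable_const (1 : ℝ)),
        integral_add (hhP.div_const Z) (integrable_const _), integral_div, integral_const]
      simp
    rw [h2] at h1
    have h3 : (∫ x, h x ∂P) / Z ≤ Z / Z := by
      gcongr
    linarith
  have heq : ∫ x, Real.log (h x) ∂P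
      = (∫ x, T x ∂P) - ∫ x, Real.log (f x) ∂P := by
    rw [← integral_congr_ae hlog, integral_sub hTP hint]
  rw [heq, div_self hZpos.ne'] at key
  linarith

/-- Donsker–Varadhan representation of the KL divergence:
`KL(P‖Q) = sup_T { E_P[T] - log E_Q[exp T] }`. -/
theorem stmt_5 {Ω : Type*} [MeasurableSpace Ω]
    (P Q : Measure Ω) [IsProbabilityMeasure P] [IsProbabilityMeasure Q]
    (hPQ : P ≪ Q)
    (hint : Integrable (fun x => Real.log ((P.rnDeriv Q x).toReal)) P) :
    ∫ x, Real.log ((P.rnDeriv Q x).toReal) ∂P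
      = sSup { r : ℝ | ∃ T : Ω → ℝ, Measurable T ∧ Integrable T P ∧
          Integrable (fun x => Real.exp (T x)) Q ∧
          r = (∫ x, T x ∂P) - Real.log (∫ x, Real.exp (T x) ∂Q) } := by
  set f : Ω → ℝ := fun x => (P.rnDeriv Q x).toReal with hf
  have hfmeas : Measurable f := (Measure.measurable_rnDeriv P Q).ennreal_toReal
  set S := { r : ℝ | ∃ T : Ω → ℝ, Measurable T ∧ Integrable T P ∧
          Integrable (fun x => Real.exp (T x)) Q ∧
          r = (∫ x, T x ∂P) - Real.log (∫ x, Real.exp (T x) ∂Q) } with hS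
  set KL : ℝ := ∫ x, Real.log (f x) ∂P with hKL
  have hub : ∀ r ∈ S, r ≤ KL := by
    rintro r ⟨T, hTmeas, hTP, hTQ, rfl⟩
    exact dv_upper P Q hPQ hint T hTmeas hTP hTQ
  have hbdd : BddAbove S := ⟨KL, hub⟩
  have hne : S.Nonempty := by
    refine ⟨0, fun _ => 0, measurable_const, integrable_const 0, by simp [integrable_const], ?_⟩
    simp
  refine le_antisymm ?_ (csSup_le hne hub)
  -- lower bound via the sequence T_n = log f + (-n) on {f = 0}
  set s : Set Ω := {x | f x = 0} with hs
  have hsmeas : MeasurableSet s := hfmeas (measurableSet_singleton 0)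
  set c : ℝ := (Q s).toReal with hc
  have hc0 : 0 ≤ c := ENNReal.toReal_nonneg
  have hPs : ∀ᵐ x ∂P, x ∉ s := by
    have hfpos : ∀ᵐ x ∂P, 0 < f x := by
      filter_upwards [Measure.rnDeriv_pos hPQ, hPQ.ae_le (Measure.rnDeriv_lt_top P Q)]
        with x h1 h2
      exact ENNReal.toReal_pos h1.ne' h2.ne
    filter_upwards [hfpos] with x hx
    simpa [hs] using hx.ne'
  have hfQ : Integrable f Q := Measure.integrable_toReal_rnDeriv
  have hfint : ∫ x, f x ∂Q = 1 := by
    rw [hf, Measure.integral_toReal_rnDeriv hPQ]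
    simp
  have hmem : ∀ n : ℕ, KL - Real.log (1 + Real.exp (-(n:ℝ)) * c) ∈ S := by
    intro n
    set T : Ω → ℝ := fun x => if f x = 0 then -(n:ℝ) else Real.log (f x) with hT
    have hTmeas : Measurable T := Measurable.ite hsmeas measurable_const (hfmeas.log)
    have hTae : T =ᵐ[P] fun x => Real.log (f x) := by
      filter_upwards [hPs] with x hx
      simp only [hT]
      rw [if_neg (by simpa [hs] using hx)]
    have hTP : Integrable T P := hint.congr hTae.symm
    have hexp_eq : ∀ x, Real.exp (T x)
        = f x + Set.indicator s (fun _ => Real.exp (-(n:ℝ))) x := by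
      intro x
      by_cases hx : f x = 0
      · simp [hT, hx, Set.indicator_of_mem, hs, Set.mem_setOf_eq]
      · have hfx : 0 < f x := lt_of_le_of_ne ENNReal.toReal_nonneg (Ne.symm hx)
        simp [hT, hx, Real.exp_log hfx, hs, Set.indicator_apply]
    have hindQ : Integrable (Set.indicator s (fun _ => Real.exp (-(n:ℝ)))) Q :=
      (integrable_const _).indicator hsmeas
    have hTQ : Integrable (fun x => Real.exp (T x)) Q := by
      refine (hfQ.add hindQ).congr ?_
      exact .of_forall fun x => (hexp_eq x).symm
    have hZ : ∫ x, Real.exp (T x) ∂Q = 1 + Real.exp (-(n:ℝ)) * c := by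
      calc ∫ x, Real.exp (T x) ∂Q
          = ∫ x, (f x + Set.indicator s (fun _ => Real.exp (-(n:ℝ))) x) ∂Q := by
            exact integral_congr_ae (.of_forall hexp_eq)
        _ = (∫ x, f x ∂Q) + ∫ x, Set.indicator s (fun _ => Real.exp (-(n:ℝ))) x ∂Q :=
            integral_add hfQ hindQ
        _ = 1 + Real.exp (-(n:ℝ)) * c := by
            rw [hfint, integral_indicator hsmeas, setIntegral_const, smul_eq_mul, hc, mul_comm]; rfl
    refine ⟨T, hTmeas, hTP, hTQ, ?_⟩
    rw [hZ, integral_congr_ae hTae, hKL]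
  -- take the limit n → ∞
  have htend : Filter.Tendsto (fun n : ℕ => KL - Real.log (1 + Real.exp (-(n:ℝ)) * c))
      Filter.atTop (nhds KL) := by
    have h1 : Filter.Tendsto (fun n : ℕ => Real.exp (-(n:ℝ)) * c)
        Filter.atTop (nhds 0) := by
      have := (Real.tendsto_exp_atBot.comp
        (Filter.tendsto_neg_atBot_iff.mpr tendsto_natCast_atTop_atTop)).mul_const c
      simpa using this
    have h2 : Filter.Tendsto (fun n : ℕ => Real.log (1 + Real.exp (-(n:ℝ)) * c))
        Filter.atTop (nhds 0) := by
      have := (Real.continuousAt_log (x := (1:ℝ)) one_ne_zero).tendsto.comp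
        (by simpa using tendsto_const_nhds.add h1 :
          Filter.Tendsto (fun n : ℕ => 1 + Real.exp (-(n:ℝ)) * c) Filter.atTop (nhds 1))
      simpa [Function.comp_def] using this
    simpa using tendsto_const_nhds.sub h2
  exact le_of_tendsto' htend (fun n => le_csSup hbdd (hmem n))
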